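/- For integers m ≥ 1, k ≥ 2, and n ≥ 1, the number of monomials x_1^{e_1} ⋯ x_n^{e_n} such that (i) each exponent e_i can be written as e_i = (m+1)·l_i + r_i with l_i ≥ 0 and 0 ≤ r_i ≤ m, (ii) l_1 + ⋯ + l_n < k, and (iii) e_1 + ⋯ + e_n ≤ mn + (m+1)(k-1) − 1, equals ((m+1)^n − 1)·C(n+k-1, n) + C(n+k-2, n). -/

import Mathlib

lemma aux_card_eq (n s : ℕ) :
    Nat.card {l : Fin n → ℕ // ∑ i, l i = s} = (n + s - 1).choose s := by
  rw [← Nat.card_congr (Sym.equivNatSumOfFintype (Fin n) s), Nat.card_eq_fintype_card,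
    Sym.card_sym_eq_choose, Fintype.card_fin]

def auxEquiv (n s : ℕ) : {l : Fin (n+1) → ℕ // ∑ i, l i = s} ≃ {l : Fin n → ℕ // ∑ i, l i ≤ s} where
  toFun g := ⟨Fin.tail g.1, by
    have := g.2; rw [Fin.sum_univ_succ] at this; simp only [Fin.tail]; omega⟩
  invFun l := ⟨Fin.cons (s - ∑ i, l.1 i) l.1, by
    rw [Fin.sum_univ_succ]; simp only [Fin.cons_zero, Fin.cons_succ]
    have := l.2; omega⟩
  left_inv g := by
    apply Subtype.ext
    have hg := g.2
    rw [Fin.sum_univ_succ] at hg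
    have h0 : s - ∑ i, Fin.tail g.1 i = g.1 0 := by simp only [Fin.tail]; omega
    simp only [h0, Fin.cons_self_tail]
  right_inv l := by
    apply Subtype.ext
    dsimp only
    funext i
    simp [Fin.tail, Fin.cons_succ]

lemma aux_card_le (n s : ℕ) :
    Nat.card {l : Fin n → ℕ // ∑ i, l i ≤ s} = (n + s).choose s := by
  rw [← Nat.card_congr (auxEquiv n s), aux_card_eq]
  congr 2
  omega

def auxEquiv2 (n m : ℕ) : {r : Fin n → ℕ // ∀ i, r i ≤ m} ≃ (Fin n → Fin (m+1)) where
  toFun r i := ⟨r.1 i, Nat.lt_succ_of_le (r.2 i)⟩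
  invFun f := ⟨fun i => (f i).1, fun i => Nat.lt_succ_iff.mp (f i).2⟩
  left_inv r := rfl
  right_inv f := rfl

lemma aux_card_bdd (n m : ℕ) :
    Nat.card {r : Fin n → ℕ // ∀ i, r i ≤ m} = (m+1)^n := by
  rw [Nat.card_congr (auxEquiv2 n m), Nat.card_eq_fintype_card]
  simp

lemma decomp_unique {m a b c d : ℕ} (hb : b ≤ m) (hd : d ≤ m)
    (h : (m+1)*a + b = (m+1)*c + d) : a = c ∧ b = d := by
  have h1 : ((m+1)*a + b) % (m+1) = b := by
    rw [Nat.mul_add_mod]; exact Nat.mod_eq_of_lt (by omega)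
  have h2 : ((m+1)*c + d) % (m+1) = d := by
    rw [Nat.mul_add_mod]; exact Nat.mod_eq_of_lt (by omega)
  have hbd : b = d := by rw [← h1, h, h2]
  subst hbd
  refine ⟨?_, rfl⟩
  have := Nat.add_right_cancel h
  exact Nat.eq_of_mul_eq_mul_left (by omega) this

lemma ncard_sprod {α β : Type*} (s : Set α) (t : Set β) :
    (s ×ˢ t).ncard = s.ncard * t.ncard := by
  rw [← Nat.card_coe_set_eq, ← Nat.card_coe_set_eq, ← Nat.card_coe_set_eq,
    Nat.card_congr (Equiv.Set.prod s t), Nat.card_prod]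

lemma aux_set (n m : ℕ) :
    {r : Fin n → ℕ | (∀ i, r i ≤ m) ∧ ∑ i, r i + 1 ≤ m * n} =
      {r : Fin n → ℕ | ∀ i, r i ≤ m} \ {fun _ => m} := by
  have hconst : ∑ _i : Fin n, m = n * m := by simp [Finset.sum_const, Finset.card_univ]
  have hcomm : n * m = m * n := Nat.mul_comm n m
  ext r
  simp only [Set.mem_setOf_eq, Set.mem_diff, Set.mem_singleton_iff]
  constructor
  · rintro ⟨hr, hs⟩
    refine ⟨hr, fun hc => ?_⟩
    have hsum : ∑ i, r i = n * m := by subst hc; simpa using hconst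
    omega
  · rintro ⟨hr, hne⟩
    refine ⟨hr, ?_⟩
    have : ∃ i, r i ≠ m := by
      by_contra hc
      push_neg at hc
      exact hne (funext hc)
    obtain ⟨i₀, hi₀⟩ := this
    have hlt : ∑ i, r i < ∑ _i : Fin n, m :=
      Finset.sum_lt_sum (fun i _ => hr i) ⟨i₀, Finset.mem_univ i₀, by
        have := hr i₀; omega⟩
    omega

lemma aux_final (n j P : ℕ) (hP : 1 ≤ P) :
    (n + j).choose j * P + (n + j).choose (j + 1) * (P - 1)
      = (P - 1) * (n + j + 1).choose n + (n + j).choose n := by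
  obtain ⟨q, rfl⟩ : ∃ q, P = q + 1 := ⟨P - 1, by omega⟩
  have hc : (n + j).choose j = (n + j).choose n := by
    rw [← Nat.choose_symm (show j ≤ n + j by omega)]; congr 1; omega
  have ha : (n + j + 1).choose n = (n + j).choose j + (n + j).choose (j + 1) := by
    have h2 : (n + j + 1).choose (j + 1) = (n + j).choose j + (n + j).choose (j + 1) :=
      Nat.choose_succ_succ _ _
    have h3 : (n + j + 1).choose n = (n + j + 1).choose (j + 1) := by
      rw [← Nat.choose_symm (show n ≤ n + j + 1 by omega)]; congr 1; omega
    omega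
  rw [ha, hc]
  simp only [Nat.add_sub_cancel]
  ring

/-- the number of monomials (exponent vectors) `e : Fin n → ℕ` such that
each `e i = (m+1) * l i + r i` with `r i ≤ m`, `∑ l i < k`, and
`∑ e i ≤ m*n + (m+1)*(k-1) - 1`, equals `((m+1)^n - 1) * C(n+k-1, n) + C(n+k-2, n)`. -/
theorem stmt0 (m k n : ℕ) (hm : 1 ≤ m) (hk : 2 ≤ k) (hn : 1 ≤ n) :
    Set.ncard {e : Fin n → ℕ |
        (∃ l r : Fin n → ℕ, (∀ i, r i ≤ m ∧ e i = (m + 1) * l i + r i) ∧ ∑ i, l i < k) ∧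
        ∑ i, e i ≤ m * n + (m + 1) * (k - 1) - 1} =
      ((m + 1) ^ n - 1) * Nat.choose (n + k - 1) n + Nat.choose (n + k - 2) n := by
  obtain ⟨j, rfl⟩ : ∃ j, k = j + 2 := ⟨k - 2, by omega⟩
  have hexp : (m + 1) * (j + 2 - 1) = (m + 1) * j + m + 1 := by
    rw [show j + 2 - 1 = j + 1 from rfl]; ring
  have hexp2 : (m + 1) * (j + 1) = (m + 1) * j + m + 1 := by ring
  have hbound : m * n + (m + 1) * (j + 2 - 1) - 1 = m * n + (m + 1) * j + m := by
    rw [hexp, ← Nat.add_assoc, Nat.add_sub_cancel, ← Nat.add_assoc]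
  have hmn : 1 ≤ m * n := Nat.one_le_iff_ne_zero.mpr (Nat.mul_ne_zero (by omega) (by omega))
  have hcomm : n * m = m * n := Nat.mul_comm n m
  -- the four basic sets
  have hfinL₁ : {l : Fin n → ℕ | ∑ i, l i ≤ j}.Finite := by
    refine (Set.Finite.pi fun _ : Fin n => Set.finite_Iic j).subset fun l hl => ?_
    intro i _
    exact le_trans (Finset.single_le_sum (f := l) (fun _ _ => Nat.zero_le _)
      (Finset.mem_univ i)) hl
  have hfinL₂ : {l : Fin n → ℕ | ∑ i, l i = j + 1}.Finite := by
    refine (Set.Finite.pi fun _ : Fin n => Set.finite_Iic (j+1)).subset fun l hl => ?_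
    intro i _
    exact le_trans (Finset.single_le_sum (f := l) (fun _ _ => Nat.zero_le _)
      (Finset.mem_univ i)) (le_of_eq hl)
  have hfinR₁ : {r : Fin n → ℕ | ∀ i, r i ≤ m}.Finite := by
    refine (Set.Finite.pi fun _ : Fin n => Set.finite_Iic m).subset fun r hr => ?_
    intro i _
    exact hr i
  have hfinR₂ : {r : Fin n → ℕ | (∀ i, r i ≤ m) ∧ ∑ i, r i + 1 ≤ m * n}.Finite :=
    hfinR₁.subset fun r hr => hr.1
  have hsum_le : ∀ r : Fin n → ℕ, (∀ i, r i ≤ m) → ∑ i, r i ≤ n * m := by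
    intro r hr
    calc ∑ i, r i ≤ ∑ _i : Fin n, m := Finset.sum_le_sum fun i _ => hr i
    _ = n * m := by simp [Finset.sum_const, Finset.card_univ]
  -- image description
  have key : {e : Fin n → ℕ |
        (∃ l r : Fin n → ℕ, (∀ i, r i ≤ m ∧ e i = (m + 1) * l i + r i) ∧ ∑ i, l i < j + 2) ∧
        ∑ i, e i ≤ m * n + (m + 1) * (j + 2 - 1) - 1} =
      (fun p : (Fin n → ℕ) × (Fin n → ℕ) => fun i => (m + 1) * p.1 i + p.2 i) ''
        ({l | ∑ i, l i ≤ j} ×ˢ {r | ∀ i, r i ≤ m} ∪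
         {l | ∑ i, l i = j + 1} ×ˢ {r | (∀ i, r i ≤ m) ∧ ∑ i, r i + 1 ≤ m * n}) := by
    ext e
    simp only [Set.mem_image, Set.mem_union, Set.mem_prod, Set.mem_setOf_eq]
    constructor
    · rintro ⟨⟨l, r, hlr, hsl⟩, hsum⟩
      rw [hbound] at hsum
      refine ⟨(l, r), ?_, funext fun i => ((hlr i).2).symm⟩
      have hr : ∀ i, r i ≤ m := fun i => (hlr i).1
      have hse : ∑ i, e i = (m + 1) * ∑ i, l i + ∑ i, r i := by
        rw [Finset.mul_sum, ← Finset.sum_add_distrib]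
        exact Finset.sum_congr rfl fun i _ => (hlr i).2
      have hrle : ∑ i, r i ≤ n * m := hsum_le r hr
      by_cases hc : ∑ i, l i ≤ j
      · exact Or.inl ⟨hc, hr⟩
      · have hl2 : ∑ i, l i = j + 1 := by omega
        rw [hse, hl2] at hsum
        have hX : ∑ i, r i + 1 ≤ m * n := by omega
        exact Or.inr ⟨hl2, hr, hX⟩
    · rintro ⟨⟨l, r⟩, hp, rfl⟩
      simp only [Set.mem_union, Set.mem_prod, Set.mem_setOf_eq] at hp ⊢
      rw [hbound]
      have hr : ∀ i, r i ≤ m := by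
        rcases hp with ⟨_, hr⟩ | ⟨_, hr, _⟩ <;> exact hr
      have hse : ∑ i, ((m + 1) * l i + r i) = (m + 1) * ∑ i, l i + ∑ i, r i := by
        rw [Finset.mul_sum, ← Finset.sum_add_distrib]
      have hrle : ∑ i, r i ≤ n * m := hsum_le r hr
      rcases hp with ⟨hl, -⟩ | ⟨hl, -, hr2⟩
      · refine ⟨⟨l, r, fun i => ⟨hr i, rfl⟩, by omega⟩, ?_⟩
        have h1 : (m + 1) * ∑ i, l i ≤ (m + 1) * j := Nat.mul_le_mul_left _ hl
        rw [hse]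
        omega
      · refine ⟨⟨l, r, fun i => ⟨hr i, rfl⟩, by omega⟩, ?_⟩
        rw [hse, hl]
        omega
  have hinj : Set.InjOn (fun p : (Fin n → ℕ) × (Fin n → ℕ) => fun i => (m + 1) * p.1 i + p.2 i)
      ({l | ∑ i, l i ≤ j} ×ˢ {r | ∀ i, r i ≤ m} ∪
       {l | ∑ i, l i = j + 1} ×ˢ {r | (∀ i, r i ≤ m) ∧ ∑ i, r i + 1 ≤ m * n}) := by
    intro p hp q hq h
    have hpr : ∀ i, p.2 i ≤ m := by
      rcases hp with ⟨_, hr⟩ | ⟨_, hr, _⟩ <;> exact hr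
    have hqr : ∀ i, q.2 i ≤ m := by
      rcases hq with ⟨_, hr⟩ | ⟨_, hr, _⟩ <;> exact hr
    have h1 : ∀ i, p.1 i = q.1 i ∧ p.2 i = q.2 i :=
      fun i => decomp_unique (hpr i) (hqr i) (congrFun h i)
    exact Prod.ext (funext fun i => (h1 i).1) (funext fun i => (h1 i).2)
  have hdisj : Disjoint ({l : Fin n → ℕ | ∑ i, l i ≤ j} ×ˢ {r : Fin n → ℕ | ∀ i, r i ≤ m})
      ({l | ∑ i, l i = j + 1} ×ˢ {r | (∀ i, r i ≤ m) ∧ ∑ i, r i + 1 ≤ m * n}) := by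
    rw [Set.disjoint_left]
    rintro ⟨l, r⟩ ⟨h1, -⟩ ⟨h2, -⟩
    simp only [Set.mem_setOf_eq] at h1 h2
    omega
  -- cardinalities
  have c1 : {l : Fin n → ℕ | ∑ i, l i ≤ j}.ncard = (n + j).choose j := by
    rw [← Nat.card_coe_set_eq]; exact aux_card_le n j
  have c2 : {l : Fin n → ℕ | ∑ i, l i = j + 1}.ncard = (n + j).choose (j + 1) := by
    rw [← Nat.card_coe_set_eq]
    have := aux_card_eq n (j + 1)
    rw [show n + (j + 1) - 1 = n + j from rfl] at this
    exact this
  have c3 : {r : Fin n → ℕ | ∀ i, r i ≤ m}.ncard = (m + 1) ^ n := by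
    rw [← Nat.card_coe_set_eq]; exact aux_card_bdd n m
  have c4 : {r : Fin n → ℕ | (∀ i, r i ≤ m) ∧ ∑ i, r i + 1 ≤ m * n}.ncard = (m + 1) ^ n - 1 := by
    rw [aux_set, Set.ncard_diff_singleton_of_mem (show (fun _ => m) ∈ {r : Fin n → ℕ | ∀ i, r i ≤ m} by simp [Set.mem_setOf_eq]), c3]
  -- put it together
  rw [key, Set.ncard_image_of_injOn hinj,
    Set.ncard_union_eq hdisj (hfinL₁.prod hfinR₁) (hfinL₂.prod hfinR₂),
    ncard_sprod, ncard_sprod, c1, c2, c3, c4]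
  -- arithmetic
  rw [show n + (j + 2) - 1 = n + j + 1 from rfl, show n + (j + 2) - 2 = n + j from rfl]
  exact aux_final n j ((m + 1) ^ n) (Nat.one_le_pow _ _ (Nat.succ_pos m))
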